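/- Let A: ℝ^d × ℝ^d → ℝ^{d×d} be defined by A(x,y) = a(x,x) - a(x,y) - a(y,x) + a(y,y), where a(x,y) is the cross quadratic variation density of a Gaussian martingale field, so that for any v ∈ ℝ^d, (x,y) ↦ ⟨A(x,y)v, v⟩ is the quadratic-variation density of the martingale t ↦ ⟨v, M(t,x) − M(t,y)⟩ and is hence symmetric and positive semidefinite. Then for x ≠ y in ℝ^d, points x_i = x + γ_i(y−x) with 0 = γ_0 < γ_1 < ... < γ_n = 1, one has ‖A(x,y)‖/|x−y| ≤ Σ_{i=1}^n ‖A(x_{i−1},x_i)‖/|x_{i−1}−x_i| and tr A(x,y)/|x−y| ≤ Σ_{i=1}^n tr A(x_{i−1},x_i)/|x_{i−1}−x_i|. -/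

import Mathlib

open scoped RealInnerProductSpace BigOperators
open Matrix

/-- Operator norm of a real `d × d` matrix, acting on Euclidean space. -/
noncomputable def matOpNorm {d : ℕ} (A : Matrix (Fin d) (Fin d) ℝ) : ℝ :=
  ‖Matrix.toEuclideanCLM (𝕜 := ℝ) A‖

/-- The second-difference kernel `A(x,y) = a(x,x) - a(x,y) - a(y,x) + a(y,y)`. -/
noncomputable def secondDiff {d : ℕ}
    (a : EuclideanSpace ℝ (Fin d) → EuclideanSpace ℝ (Fin d) → Matrix (Fin d) (Fin d) ℝ)
    (x y : EuclideanSpace ℝ (Fin d)) : Matrix (Fin d) (Fin d) ℝ :=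
  a x x - a x y - a y x + a y y

lemma inner_toEuclideanLin_eq {d : ℕ} (M : Matrix (Fin d) (Fin d) ℝ)
    (u w : EuclideanSpace ℝ (Fin d)) :
    ⟪Matrix.toEuclideanLin M u, w⟫ = ∑ i, (∑ j, M i j * u j) * w i := by
  simp [Matrix.toEuclideanLin_apply, PiLp.inner_apply, Matrix.mulVec, dotProduct,
    mul_comm]

lemma inner_toEuclideanLin_comm {d : ℕ} (M : Matrix (Fin d) (Fin d) ℝ)
    (u w : EuclideanSpace ℝ (Fin d)) :
    ⟪Matrix.toEuclideanLin M u, w⟫ = ⟪Matrix.toEuclideanLin Mᵀ w, u⟫ := by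
  rw [inner_toEuclideanLin_eq, inner_toEuclideanLin_eq]
  simp only [Matrix.transpose_apply, Finset.sum_mul]
  rw [Finset.sum_comm]
  apply Finset.sum_congr rfl; intro i _
  apply Finset.sum_congr rfl; intro j _
  ring

lemma inner_toEuclideanLin_transpose {d : ℕ} (M : Matrix (Fin d) (Fin d) ℝ)
    (v : EuclideanSpace ℝ (Fin d)) :
    ⟪Matrix.toEuclideanLin Mᵀ v, v⟫ = ⟪Matrix.toEuclideanLin M v, v⟫ :=
  (inner_toEuclideanLin_comm M v v).symm

lemma inner_toEuclideanLin_single {d : ℕ} (M : Matrix (Fin d) (Fin d) ℝ) (j : Fin d) :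
    ⟪Matrix.toEuclideanLin M (EuclideanSpace.single j (1:ℝ)), EuclideanSpace.single j 1⟫
      = M j j := by
  rw [inner_toEuclideanLin_eq]
  simp [EuclideanSpace.single_apply, Finset.sum_ite_eq', Finset.sum_ite_eq]

lemma cs_of_nonneg {V : Type*} [AddCommGroup V] [Module ℝ V] (b : V → V → ℝ)
    (hadd : ∀ u v w, b (u + v) w = b u w + b v w)
    (hsmul : ∀ (t : ℝ) u w, b (t • u) w = t * b u w)
    (hsymm : ∀ u w, b u w = b w u)
    (hnn : ∀ u, 0 ≤ b u u) (u w : V) :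
    b u w ≤ Real.sqrt (b u u) * Real.sqrt (b w w) := by
  have hq : ∀ t : ℝ, 0 ≤ b w w * (t * t) + (2 * b u w) * t + b u u := by
    intro t
    have e1 : b (u + t • w) (u + t • w) =
        b w w * (t * t) + (2 * b u w) * t + b u u := by
      rw [hadd, hsmul, hsymm u (u + t • w), hadd, hsmul, hsymm w (u + t • w), hadd, hsmul,
        hsymm w u]
      ring
    rw [← e1]; exact hnn _
  have hd := discrim_le_zero hq
  rw [discrim] at hd
  have h2 : b u w ^ 2 ≤ b u u * b w w := by nlinarith
  calc b u w ≤ |b u w| := le_abs_self _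
    _ = Real.sqrt (b u w ^ 2) := (Real.sqrt_sq_eq_abs _).symm
    _ ≤ Real.sqrt (b u u * b w w) := Real.sqrt_le_sqrt h2
    _ = Real.sqrt (b u u) * Real.sqrt (b w w) := Real.sqrt_mul (hnn u) _

lemma toEuclideanCLM_apply_eq {d : ℕ} (M : Matrix (Fin d) (Fin d) ℝ)
    (v : EuclideanSpace ℝ (Fin d)) :
    Matrix.toEuclideanCLM (𝕜 := ℝ) M v = Matrix.toEuclideanLin M v := by
  rw [← Matrix.coe_toEuclideanCLM_eq_toEuclideanLin]; rfl

lemma inner_toEuclideanLin_le_opNorm {d : ℕ} (M : Matrix (Fin d) (Fin d) ℝ)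
    (v : EuclideanSpace ℝ (Fin d)) :
    ⟪Matrix.toEuclideanLin M v, v⟫ ≤ matOpNorm M * ‖v‖ ^ 2 := by
  calc ⟪Matrix.toEuclideanLin M v, v⟫ ≤ ‖Matrix.toEuclideanLin M v‖ * ‖v‖ :=
        real_inner_le_norm _ _
    _ ≤ (matOpNorm M * ‖v‖) * ‖v‖ := by
        apply mul_le_mul_of_nonneg_right _ (norm_nonneg v)
        rw [← toEuclideanCLM_apply_eq]
        exact (Matrix.toEuclideanCLM (𝕜 := ℝ) M).le_opNorm v
    _ = matOpNorm M * ‖v‖ ^ 2 := by ring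

lemma matOpNorm_le_of_inner {d : ℕ} (M : Matrix (Fin d) (Fin d) ℝ) (hM : Mᵀ = M)
    (hnn : ∀ v : EuclideanSpace ℝ (Fin d), 0 ≤ ⟪Matrix.toEuclideanLin M v, v⟫)
    {C : ℝ} (hC : 0 ≤ C)
    (hle : ∀ v : EuclideanSpace ℝ (Fin d), ⟪Matrix.toEuclideanLin M v, v⟫ ≤ C * ‖v‖ ^ 2) :
    matOpNorm M ≤ C := by
  have hcomm : ∀ u w : EuclideanSpace ℝ (Fin d),
      ⟪Matrix.toEuclideanLin M u, w⟫ = ⟪Matrix.toEuclideanLin M w, u⟫ := by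
    intro u w; rw [inner_toEuclideanLin_comm, hM]
  have hcs : ∀ u w : EuclideanSpace ℝ (Fin d),
      ⟪Matrix.toEuclideanLin M u, w⟫ ≤
        Real.sqrt ⟪Matrix.toEuclideanLin M u, u⟫ *
          Real.sqrt ⟪Matrix.toEuclideanLin M w, w⟫ :=
    cs_of_nonneg (fun u w => ⟪Matrix.toEuclideanLin M u, w⟫)
      (fun u v w => by simp [inner_add_left])
      (fun t u w => by simp [real_inner_smul_left, Finset.mul_sum, mul_assoc])
      hcomm hnn
  apply ContinuousLinearMap.opNorm_le_bound _ hC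
  intro v
  rw [toEuclideanCLM_apply_eq]
  rcases eq_or_lt_of_le (norm_nonneg (Matrix.toEuclideanLin M v)) with h0 | h0
  · rw [← h0]; positivity
  · have hCs : Real.sqrt C * Real.sqrt C = C := Real.mul_self_sqrt hC
    have e3 : Real.sqrt ⟪Matrix.toEuclideanLin M v, v⟫ ≤ Real.sqrt C * ‖v‖ := by
      calc _ ≤ Real.sqrt (C * ‖v‖ ^ 2) := Real.sqrt_le_sqrt (hle v)
        _ = Real.sqrt C * ‖v‖ := by rw [Real.sqrt_mul hC, Real.sqrt_sq (norm_nonneg v)]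
    have e4 : Real.sqrt ⟪Matrix.toEuclideanLin M (Matrix.toEuclideanLin M v),
        Matrix.toEuclideanLin M v⟫ ≤ Real.sqrt C * ‖Matrix.toEuclideanLin M v‖ := by
      calc _ ≤ Real.sqrt (C * ‖Matrix.toEuclideanLin M v‖ ^ 2) := Real.sqrt_le_sqrt (hle _)
        _ = _ := by rw [Real.sqrt_mul hC, Real.sqrt_sq (norm_nonneg _)]
    have key : ‖Matrix.toEuclideanLin M v‖ ^ 2 ≤
        (Real.sqrt C * ‖v‖) * (Real.sqrt C * ‖Matrix.toEuclideanLin M v‖) := by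
      calc ‖Matrix.toEuclideanLin M v‖ ^ 2
          = ⟪Matrix.toEuclideanLin M v, Matrix.toEuclideanLin M v⟫ :=
            (real_inner_self_eq_norm_sq _).symm
        _ ≤ Real.sqrt ⟪Matrix.toEuclideanLin M v, v⟫ *
            Real.sqrt ⟪Matrix.toEuclideanLin M (Matrix.toEuclideanLin M v),
              Matrix.toEuclideanLin M v⟫ := by
            exact hcs v (Matrix.toEuclideanLin M v)
        _ ≤ (Real.sqrt C * ‖v‖) * (Real.sqrt C * ‖Matrix.toEuclideanLin M v‖) := by
            apply mul_le_mul e3 e4 (Real.sqrt_nonneg _); positivity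
    have key2 : ‖Matrix.toEuclideanLin M v‖ * ‖Matrix.toEuclideanLin M v‖ ≤
        (C * ‖v‖) * ‖Matrix.toEuclideanLin M v‖ := by
      have e5 : Real.sqrt C * ‖v‖ * (Real.sqrt C * ‖Matrix.toEuclideanLin M v‖) =
          C * ‖v‖ * ‖Matrix.toEuclideanLin M v‖ := by
        rw [show Real.sqrt C * ‖v‖ * (Real.sqrt C * ‖Matrix.toEuclideanLin M v‖) =
          (Real.sqrt C * Real.sqrt C) * (‖v‖ * ‖Matrix.toEuclideanLin M v‖) from by ring, hCs]
        ring
      nlinarith [key, e5]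
    exact le_of_mul_le_mul_right key2 h0

/-- subadditivity of `‖A(x,y)‖/|x-y|` and `tr A(x,y)/|x-y|` along partitions of
the segment from `x` to `y`, for the second-difference kernel of a symmetric positive
semidefinite (Gaussian martingale field) covariance kernel `a`. -/
theorem segment_subadditivity_of_psd_kernel {d : ℕ}
    (a : EuclideanSpace ℝ (Fin d) → EuclideanSpace ℝ (Fin d) → Matrix (Fin d) (Fin d) ℝ)
    (ha_cont : Continuous fun p : EuclideanSpace ℝ (Fin d) × EuclideanSpace ℝ (Fin d) =>
      a p.1 p.2)
    (ha_symm : ∀ x y, (a x y)ᵀ = a y x)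
    (ha_psd : ∀ (m : ℕ) (z : Fin m → EuclideanSpace ℝ (Fin d))
      (v : Fin m → EuclideanSpace ℝ (Fin d)),
      0 ≤ ∑ j : Fin m, ∑ k : Fin m, ⟪Matrix.toEuclideanLin (a (z j) (z k)) (v k), v j⟫)
    (x y : EuclideanSpace ℝ (Fin d)) (hxy : x ≠ y)
    (n : ℕ) (hn : 1 ≤ n) (γ : Fin (n + 1) → ℝ)
    (hγmono : StrictMono γ) (hγ0 : γ 0 = 0) (hγn : γ (Fin.last n) = 1) :
    (matOpNorm (secondDiff a x y) / ‖x - y‖ ≤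
      ∑ i : Fin n, matOpNorm (secondDiff a (x + γ i.castSucc • (y - x))
          (x + γ i.succ • (y - x))) /
        ‖(x + γ i.castSucc • (y - x)) - (x + γ i.succ • (y - x))‖) ∧
    (Matrix.trace (secondDiff a x y) / ‖x - y‖ ≤
      ∑ i : Fin n, Matrix.trace (secondDiff a (x + γ i.castSucc • (y - x))
          (x + γ i.succ • (y - x))) /
        ‖(x + γ i.castSucc • (y - x)) - (x + γ i.succ • (y - x))‖) := by
  set p : Fin (n + 1) → EuclideanSpace ℝ (Fin d) := fun j => x + γ j • (y - x) with hp
  have hrw : ∀ j : Fin (n + 1), x + γ j • (y - x) = p j := fun j => rfl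
  have hp0 : p 0 = x := by simp [hp, hγ0]
  have hpl : p (Fin.last n) = y := by simp [hp, hγn]
  set Δ : Fin n → ℝ := fun i => γ i.succ - γ i.castSucc with hΔ
  have hΔpos : ∀ i, 0 < Δ i := fun i => sub_pos.mpr (hγmono (Fin.castSucc_lt_succ : i.castSucc < i.succ))
  have hΔsum : ∑ i, Δ i = 1 := by
    have hlt : ∀ m : ℕ, min m n < n + 1 := fun m => Nat.lt_succ_of_le (min_le_right m n)
    set f : ℕ → ℝ := fun m => γ ⟨min m n, hlt m⟩ with hf
    have h1 : ∀ i : Fin n, Δ i = f (↑i + 1) - f ↑i := by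
      intro i
      have e1 : f (↑i + 1) = γ i.succ := by
        apply congrArg γ; apply Fin.ext; simp [hf] <;> omega
      have e2 : f ↑i = γ i.castSucc := by
        apply congrArg γ; apply Fin.ext; simp [hf] <;> omega
      rw [e1, e2]
    calc ∑ i, Δ i = ∑ i : Fin n, (f (↑i + 1) - f ↑i) :=
          Finset.sum_congr rfl fun i _ => h1 i
      _ = ∑ i ∈ Finset.range n, (f (i + 1) - f i) :=
          Fin.sum_univ_eq_sum_range (fun m => f (m + 1) - f m) n
      _ = f n - f 0 := Finset.sum_range_sub f n
      _ = 1 := by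
        have e1 : f n = γ (Fin.last n) := by
          apply congrArg γ; apply Fin.ext; simp [hf]
        have e2 : f 0 = γ 0 := by
          apply congrArg γ; apply Fin.ext; simp [hf]
        rw [e1, e2, hγn, hγ0]; ring
  have hnormxy : (0:ℝ) < ‖x - y‖ := by
    rw [norm_pos_iff]; exact sub_ne_zero.mpr hxy
  have hdist : ∀ i : Fin n, ‖p i.castSucc - p i.succ‖ = Δ i * ‖x - y‖ := by
    intro i
    have e : p i.castSucc - p i.succ = (γ i.castSucc - γ i.succ) • (y - x) := by
      simp only [hp, add_sub_add_left_eq_sub, ← sub_smul]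
    rw [e, norm_smul, Real.norm_eq_abs, abs_sub_comm,
      abs_of_pos (sub_pos.mpr (hγmono (Fin.castSucc_lt_succ : i.castSucc < i.succ))), norm_sub_rev]
  -- Core quadratic-form inequality, for every vector `v`.
  have core : ∀ v : EuclideanSpace ℝ (Fin d),
      (∀ j k : Fin (n + 1),
        0 ≤ ⟪Matrix.toEuclideanLin (secondDiff a (p j) (p k)) v, v⟫) ∧
      (⟪Matrix.toEuclideanLin (secondDiff a x y) v, v⟫ ≤
        ∑ i : Fin n,
          ⟪Matrix.toEuclideanLin (secondDiff a (p i.castSucc) (p i.succ)) v, v⟫ / Δ i) := by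
    intro v
    set g : Fin (n + 1) → Fin (n + 1) → ℝ :=
      fun j k => ⟪Matrix.toEuclideanLin (a (p j) (p k)) v, v⟫ with hg
    set b : (Fin (n + 1) → ℝ) → (Fin (n + 1) → ℝ) → ℝ :=
      fun c e => ∑ j, ∑ k, c j * e k * g j k with hbdef
    have hgsymm : ∀ j k, g j k = g k j := by
      intro j k
      simp only [hg]
      rw [← inner_toEuclideanLin_transpose, ha_symm]
    have hbnn : ∀ c, 0 ≤ b c c := by
      intro c
      calc (0:ℝ) ≤ ∑ j, ∑ k,
            ⟪Matrix.toEuclideanLin (a (p j) (p k)) ((fun k => c k • v) k),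
              (fun k => c k • v) j⟫ := ha_psd (n + 1) p (fun k => c k • v)
        _ = b c c := by
          simp only [hbdef]
          apply Finset.sum_congr rfl; intro j _
          apply Finset.sum_congr rfl; intro k _
          rw [LinearMap.map_smul, real_inner_smul_left, real_inner_smul_right]
          simp only [hg, smul_eq_mul]; ring
    have hbadd : ∀ c c' e, b (c + c') e = b c e + b c' e := by
      intro c c' e
      simp only [hbdef, Pi.add_apply, add_mul, Finset.sum_add_distrib]
    have hbsmul : ∀ (t : ℝ) c e, b (t • c) e = t * b c e := by
      intro t c e
      simp only [hbdef, Pi.smul_apply, smul_eq_mul, Finset.mul_sum, mul_assoc]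
    have hbsymm : ∀ c e, b c e = b e c := by
      intro c e
      simp only [hbdef]
      rw [Finset.sum_comm]
      apply Finset.sum_congr rfl; intro j _
      apply Finset.sum_congr rfl; intro k _
      rw [hgsymm]; ring
    have hbsub : ∀ c c' e, b (c - c') e = b c e - b c' e := by
      intro c c' e
      simp only [hbdef, Pi.sub_apply, sub_mul, Finset.sum_sub_distrib]
    have hbsub' : ∀ c e e', b c (e - e') = b c e - b c e' := by
      intro c e e'
      rw [hbsymm, hbsub, hbsymm e c, hbsymm e' c]
    have hbsingle : ∀ j0 k0, b (Pi.single (M := fun _ : Fin (n + 1) => ℝ) j0 1) (Pi.single (M := fun _ : Fin (n + 1) => ℝ) k0 1) = g j0 k0 := by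
      intro j0 k0
      simp only [hbdef, Pi.single_apply]
      rw [Finset.sum_eq_single j0]
      · rw [Finset.sum_eq_single k0]
        · simp
        · intro k _ hk; simp [hk]
        · intro h; exact absurd (Finset.mem_univ k0) h
      · intro j _ hj; simp [hj]
      · intro h; exact absurd (Finset.mem_univ j0) h
    have hpair : ∀ j0 k0 : Fin (n + 1),
        b (Pi.single (M := fun _ : Fin (n + 1) => ℝ) j0 1 - Pi.single (M := fun _ : Fin (n + 1) => ℝ) k0 1) (Pi.single (M := fun _ : Fin (n + 1) => ℝ) j0 1 - Pi.single (M := fun _ : Fin (n + 1) => ℝ) k0 1) =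
          ⟪Matrix.toEuclideanLin (secondDiff a (p j0) (p k0)) v, v⟫ := by
      intro j0 k0
      have hgdef : ∀ j k, g j k = ⟪Matrix.toEuclideanLin (a (p j) (p k)) v, v⟫ :=
        fun _ _ => rfl
      rw [hbsub, hbsub', hbsub', hbsingle, hbsingle, hbsingle, hbsingle,
        hgdef, hgdef, hgdef, hgdef]
      simp only [secondDiff, map_sub, map_add, LinearMap.sub_apply, LinearMap.add_apply,
        inner_sub_left, inner_add_left]
      ring
    have hposall : ∀ j k : Fin (n + 1),
        0 ≤ ⟪Matrix.toEuclideanLin (secondDiff a (p j) (p k)) v, v⟫ := by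
      intro j k
      rw [← hpair j k]; exact hbnn _
    refine ⟨hposall, ?_⟩
    -- decomposition of the indicator of the pair (0, last) as a telescoping sum
    have hdecomp : (Pi.single (M := fun _ : Fin (n + 1) => ℝ) (0 : Fin (n + 1)) (1:ℝ) - Pi.single (M := fun _ : Fin (n + 1) => ℝ) (Fin.last n) 1) =
        ∑ i : Fin n, (Pi.single (M := fun _ : Fin (n + 1) => ℝ) (i.castSucc : Fin (n + 1)) (1:ℝ) - Pi.single (M := fun _ : Fin (n + 1) => ℝ) i.succ 1) := by
      funext j
      rw [Finset.sum_apply]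
      simp only [Pi.sub_apply, Pi.single_apply]
      rw [Finset.sum_sub_distrib]
      have hA : ∑ i : Fin n, (if j = i.castSucc then (1:ℝ) else 0) =
          if j = Fin.last n then 0 else 1 := by
        induction j using Fin.lastCases with
        | last =>
          rw [if_pos rfl]
          apply Finset.sum_eq_zero
          intro i _
          rw [if_neg (Fin.castSucc_lt_last i).ne']
        | cast i0 =>
          rw [if_neg (Fin.castSucc_lt_last i0).ne]
          rw [Finset.sum_eq_single i0]
          · simp
          · intro i _ hi
            rw [if_neg (fun h => hi ((Fin.castSucc_inj.mp h).symm))]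
          · intro h; exact absurd (Finset.mem_univ i0) h
      have hB : ∑ i : Fin n, (if j = i.succ then (1:ℝ) else 0) =
          if j = 0 then 0 else 1 := by
        induction j using Fin.cases with
        | zero =>
          rw [if_pos rfl]
          apply Finset.sum_eq_zero
          intro i _
          rw [if_neg (Fin.succ_ne_zero i).symm]
        | succ i0 =>
          rw [if_neg (Fin.succ_ne_zero i0)]
          rw [Finset.sum_eq_single i0]
          · simp
          · intro i _ hi
            rw [if_neg (fun h => hi ((Fin.succ_inj.mp h).symm))]
          · intro h; exact absurd (Finset.mem_univ i0) h
      rw [hA, hB]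
      have h0l : (0 : Fin (n + 1)) ≠ Fin.last n := by
        rw [Fin.ne_iff_vne]; simp [Fin.last]; omega
      by_cases h1 : j = 0
      · subst h1; simp [h0l]
      · by_cases h2 : j = Fin.last n
        · subst h2; simp [Ne.symm h0l, h0l.symm]
        · simp [h1, h2]
    have hsum_left : ∀ (c : Fin n → (Fin (n + 1) → ℝ)) e,
        b (∑ i, c i) e = ∑ i, b (c i) e := by
      intro c e
      simp only [hbdef, Finset.sum_apply, Finset.sum_mul]
      rw [Finset.sum_congr rfl fun j (_ : j ∈ Finset.univ) => Finset.sum_comm]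
      rw [Finset.sum_comm]
    set u : Fin n → (Fin (n + 1) → ℝ) :=
      fun i => Pi.single (M := fun _ : Fin (n + 1) => ℝ) i.castSucc 1 - Pi.single (M := fun _ : Fin (n + 1) => ℝ) i.succ 1 with hu
    set s : Fin n → ℝ := fun i => b (u i) (u i) with hs
    have hsnn : ∀ i, 0 ≤ s i := fun i => hbnn _
    have hcsb := cs_of_nonneg b hbadd hbsmul hbsymm hbnn
    have step1 : ⟪Matrix.toEuclideanLin (secondDiff a x y) v, v⟫ = b (∑ i, u i) (∑ i, u i) := by
      rw [← hp0, ← hpl, ← hpair 0 (Fin.last n), hdecomp]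
    have step2 : b (∑ i, u i) (∑ i, u i) = ∑ i, ∑ j, b (u j) (u i) := by
      rw [hsum_left]
      apply Finset.sum_congr rfl; intro i _
      rw [hbsymm, hsum_left]
    have step3 : ∑ i, ∑ j, b (u j) (u i) ≤
        (∑ i, Real.sqrt (s i)) * (∑ i, Real.sqrt (s i)) := by
      rw [Finset.sum_mul_sum]
      apply Finset.sum_le_sum; intro i _
      apply Finset.sum_le_sum; intro j _
      calc b (u j) (u i) ≤ Real.sqrt (b (u j) (u j)) * Real.sqrt (b (u i) (u i)) := hcsb _ _
        _ = Real.sqrt (s i) * Real.sqrt (s j) := mul_comm _ _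
    have step4 : (∑ i, Real.sqrt (s i)) * (∑ i, Real.sqrt (s i)) ≤ ∑ i, s i / Δ i := by
      have hcs2 := Finset.sum_mul_sq_le_sq_mul_sq Finset.univ
        (fun i => Real.sqrt (Δ i)) (fun i => Real.sqrt (s i / Δ i))
      have e1 : ∀ i : Fin n, Real.sqrt (Δ i) * Real.sqrt (s i / Δ i) = Real.sqrt (s i) := by
        intro i
        rw [← Real.sqrt_mul (hΔpos i).le]
        rw [mul_comm, div_mul_cancel₀ _ (hΔpos i).ne']
      have e2 : ∀ i : Fin n, Real.sqrt (Δ i) ^ 2 = Δ i := fun i => Real.sq_sqrt (hΔpos i).le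
      have e3 : ∀ i : Fin n, Real.sqrt (s i / Δ i) ^ 2 = s i / Δ i :=
        fun i => Real.sq_sqrt (div_nonneg (hsnn i) (hΔpos i).le)
      rw [Finset.sum_congr rfl fun i _ => e1 i, Finset.sum_congr rfl fun i _ => e2 i,
        Finset.sum_congr rfl fun i _ => e3 i, hΔsum, one_mul] at hcs2
      calc (∑ i, Real.sqrt (s i)) * (∑ i, Real.sqrt (s i))
          = (∑ i, Real.sqrt (s i)) ^ 2 := (sq _).symm
        _ ≤ ∑ i, s i / Δ i := hcs2
    have step5 : ∑ i, s i / Δ i = ∑ i : Fin n,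
        ⟪Matrix.toEuclideanLin (secondDiff a (p i.castSucc) (p i.succ)) v, v⟫ / Δ i := by
      apply Finset.sum_congr rfl; intro i _
      rw [hs]
      simp only
      rw [hu]
      simp only
      rw [hpair]
    rw [step1, step2, ← step5]
    exact le_trans step3 step4
  -- symmetry and the two inequalities without norms
  have hsdT : (secondDiff a x y)ᵀ = secondDiff a x y := by
    simp only [secondDiff, Matrix.transpose_add, Matrix.transpose_sub, ha_symm]
    abel
  have hnormineq : matOpNorm (secondDiff a x y) ≤
      ∑ i : Fin n, matOpNorm (secondDiff a (p i.castSucc) (p i.succ)) / Δ i := by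
    have hC : (0:ℝ) ≤ ∑ i : Fin n, matOpNorm (secondDiff a (p i.castSucc) (p i.succ)) / Δ i :=
      Finset.sum_nonneg fun i _ => div_nonneg (norm_nonneg _) (hΔpos i).le
    apply matOpNorm_le_of_inner _ hsdT _ hC
    · intro v
      calc ⟪Matrix.toEuclideanLin (secondDiff a x y) v, v⟫
          ≤ ∑ i : Fin n,
            ⟪Matrix.toEuclideanLin (secondDiff a (p i.castSucc) (p i.succ)) v, v⟫ / Δ i :=
            (core v).2
        _ ≤ ∑ i : Fin n,
            (matOpNorm (secondDiff a (p i.castSucc) (p i.succ)) * ‖v‖ ^ 2) / Δ i := by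
            apply Finset.sum_le_sum; intro i _
            exact (div_le_div_iff_of_pos_right (hΔpos i)).mpr (inner_toEuclideanLin_le_opNorm _ v)
        _ = (∑ i : Fin n, matOpNorm (secondDiff a (p i.castSucc) (p i.succ)) / Δ i) * ‖v‖ ^ 2 := by
            rw [Finset.sum_mul]
            apply Finset.sum_congr rfl; intro i _
            rw [mul_div_right_comm]
    · intro v
      have h := (core v).1 0 (Fin.last n)
      rwa [hp0, hpl] at h
  have htrineq : Matrix.trace (secondDiff a x y) ≤
      ∑ i : Fin n, Matrix.trace (secondDiff a (p i.castSucc) (p i.succ)) / Δ i := by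
    have etr : ∀ N : Matrix (Fin d) (Fin d) ℝ, Matrix.trace N =
        ∑ j : Fin d, ⟪Matrix.toEuclideanLin N (EuclideanSpace.single j 1),
          EuclideanSpace.single j 1⟫ := by
      intro N
      simp only [inner_toEuclideanLin_single]
      rfl
    rw [etr]
    calc ∑ j : Fin d, ⟪Matrix.toEuclideanLin (secondDiff a x y) (EuclideanSpace.single j 1),
          EuclideanSpace.single j 1⟫
        ≤ ∑ j : Fin d, ∑ i : Fin n,
            ⟪Matrix.toEuclideanLin (secondDiff a (p i.castSucc) (p i.succ))
              (EuclideanSpace.single j 1), EuclideanSpace.single j 1⟫ / Δ i :=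
          Finset.sum_le_sum fun j _ => (core _).2
      _ = ∑ i : Fin n, ∑ j : Fin d,
            ⟪Matrix.toEuclideanLin (secondDiff a (p i.castSucc) (p i.succ))
              (EuclideanSpace.single j 1), EuclideanSpace.single j 1⟫ / Δ i :=
          Finset.sum_comm
      _ = ∑ i : Fin n, Matrix.trace (secondDiff a (p i.castSucc) (p i.succ)) / Δ i := by
          apply Finset.sum_congr rfl; intro i _
          rw [← Finset.sum_div, ← etr]
  -- final algebra with the norms
  have hgoal : ∀ T : Matrix (Fin d) (Fin d) ℝ → ℝ,
      T (secondDiff a x y) ≤ ∑ i : Fin n, T (secondDiff a (p i.castSucc) (p i.succ)) / Δ i →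
      T (secondDiff a x y) / ‖x - y‖ ≤
        ∑ i : Fin n, T (secondDiff a (p i.castSucc) (p i.succ)) /
          ‖p i.castSucc - p i.succ‖ := by
    intro T hT
    have e : ∀ i : Fin n, T (secondDiff a (p i.castSucc) (p i.succ)) /
        ‖p i.castSucc - p i.succ‖ =
        (T (secondDiff a (p i.castSucc) (p i.succ)) / Δ i) / ‖x - y‖ := by
      intro i
      rw [hdist i, div_div]
    rw [Finset.sum_congr rfl fun i _ => e i, ← Finset.sum_div]
    exact (div_le_div_iff_of_pos_right hnormxy).mpr hT
  constructor
  · simpa only [hrw] using hgoal matOpNorm hnormineq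
  · simpa only [hrw] using hgoal Matrix.trace htrineq
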